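/- For n ≥ 2, the indecomposable subtournaments of W_{2n+1} on at least 5 vertices are, up to isomorphism, exactly the tournaments W_{2m+1} for 2 ≤ m ≤ n. -/

import Mathlib

/-- `A` is the arc relation of a tournament on the whole type. -/
def IsTournament {V : Type*} (A : V → V → Prop) : Prop :=
  (∀ x, ¬ A x x) ∧ ∀ x y : V, x ≠ y → (A x y ↔ ¬ A y x)

/-- `I` is an interval of the subtournament induced on `X`. -/
def IsIntervalOn {V : Type*} (A : V → V → Prop) (X I : Set V) : Prop :=
  I ⊆ X ∧ ∀ x ∈ X \ I, (∀ i ∈ I, A x i) ∨ (∀ i ∈ I, A i x)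

/-- Trivial intervals of the tournament induced on `X`. -/
def IsTrivialOn {V : Type*} (X I : Set V) : Prop :=
  I = ∅ ∨ (∃ v, I = {v}) ∨ I = X

/-- The subtournament induced on `X` is indecomposable. -/
def IndecomposableOn {V : Type*} (A : V → V → Prop) (X : Set V) : Prop :=
  ∀ I : Set V, IsIntervalOn A X I → IsTrivialOn X I

/-- The subtournament of `A` on `X` is isomorphic to the subtournament of `B` on `Y`. -/
def IsoOn {V W : Type*} (A : V → V → Prop) (B : W → W → Prop) (X : Set V) (Y : Set W) : Prop :=
  ∃ f : X → Y, Function.Bijective f ∧ ∀ a b : X, A a b ↔ B (f a) (f b)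

/-- The tournament `W_{2n+1}` on the vertex set `Set.Iic (2*n) ⊆ ℕ`: on `{0,...,2n-1}` it is
the usual total order, and the vertex `2n` beats exactly the even vertices. -/
def Warc (n : ℕ) (i j : ℕ) : Prop :=
  (i < 2*n ∧ j < 2*n ∧ i < j) ∨ (i = 2*n ∧ j < 2*n ∧ Even j) ∨ (j = 2*n ∧ i < 2*n ∧ Odd i)

lemma warc_iff (n i j : ℕ) : Warc n i j ↔
    ((i < 2*n ∧ j < 2*n ∧ i < j) ∨ (i = 2*n ∧ j < 2*n ∧ j % 2 = 0) ∨
      (j = 2*n ∧ i < 2*n ∧ i % 2 = 1)) := by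
  simp [Warc, Nat.even_iff, Nat.odd_iff]

lemma mix_mem {n : ℕ} {X I : Set ℕ} (hI : IsIntervalOn (Warc n) X I)
    {x p q : ℕ} (hx : x ∈ X) (hxI : x ∉ I) (hp : p ∈ I) (hq : q ∈ I)
    (hxp : Warc n x p) (hqx : Warc n q x) : False := by
  rcases hI.2 x ⟨hx, hxI⟩ with h | h
  · have h2 := h q hq
    rw [warc_iff] at h2 hqx; omega
  · have h2 := h p hp
    rw [warc_iff] at h2 hxp; omega

lemma not_trivial {X I : Set ℕ} {x y z : ℕ} (hx : x ∈ I) (hy : y ∈ I) (hxy : x ≠ y)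
    (hz : z ∈ X) (hzI : z ∉ I) : ¬ IsTrivialOn X I := by
  rintro (rfl | ⟨v, rfl⟩ | rfl)
  · exact hx
  · exact hxy (hx.trans hy.symm)
  · exact hzI hz
lemma W_indec (n m : ℕ) (hm : 2 ≤ m) (hmn : m ≤ n) :
    IndecomposableOn (Warc n) (Set.Iio (2*m) ∪ {2*n}) := by
  intro I hI
  set X : Set ℕ := Set.Iio (2*m) ∪ {2*n} with hX
  have hmemX : ∀ v, v ∈ X ↔ (v < 2*m ∨ v = 2*n) := by
    intro v; simp only [hX, Set.mem_union, Set.mem_Iio, Set.mem_singleton_iff]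
  by_contra htriv
  have hne : I.Nonempty := by
    rcases Set.eq_empty_or_nonempty I with h | h
    · exact absurd (Or.inl h) htriv
    · exact h
  have hab : ∃ a ∈ I, ∃ b ∈ I, a ≠ b := by
    by_contra h
    push_neg at h
    obtain ⟨v, hv⟩ := hne
    refine htriv (Or.inr (Or.inl ⟨v, ?_⟩))
    ext x
    simp only [Set.mem_singleton_iff]
    exact ⟨fun hx => h x hx v hv, fun hx => hx ▸ hv⟩
  obtain ⟨a, ha, b, hb, habne⟩ := hab
  have haX := hI.1 ha
  have hbX := hI.1 hb
  rw [hmemX] at haX hbX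
  -- from an element of I below 2m together with 2n ∈ I, get an even and odd element of I
  have omegapair : ∀ a, a ∈ I → a < 2*m → (2*n) ∈ I →
      ∃ e ∈ I, ∃ o ∈ I, e < 2*m ∧ o < 2*m ∧ e % 2 = 0 ∧ o % 2 = 1 := by
    intro a ha ha2m hω
    by_cases hpar : a % 2 = 0
    · have h1 : a + 1 < 2*m := by omega
      have : a + 1 ∈ I := by
        by_contra hns
        exact mix_mem hI ((hmemX _).2 (Or.inl h1)) hns hω ha
          (by rw [warc_iff]; omega) (by rw [warc_iff]; omega)
      exact ⟨a, ha, a+1, this, ha2m, h1, hpar, by omega⟩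
    · have h1 : a - 1 < 2*m := by omega
      have : a - 1 ∈ I := by
        by_contra hns
        exact mix_mem hI ((hmemX _).2 (Or.inl h1)) hns ha hω
          (by rw [warc_iff]; omega) (by rw [warc_iff]; omega)
      exact ⟨a-1, this, a, ha, h1, ha2m, by omega, by omega⟩
  -- get even, odd elements of I below 2m and 2n ∈ I
  have key : ∃ e ∈ I, ∃ o ∈ I, e < 2*m ∧ o < 2*m ∧ e % 2 = 0 ∧ o % 2 = 1 ∧ (2*n) ∈ I := by
    have chain : ∀ a b, a ∈ I → b ∈ I → a < b → b < 2*m →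
        ∃ e ∈ I, ∃ o ∈ I, e < 2*m ∧ o < 2*m ∧ e % 2 = 0 ∧ o % 2 = 1 ∧ (2*n) ∈ I := by
      intro a b ha hb hlt hb2m
      have ha2m : a < 2*m := lt_trans hlt hb2m
      have hsucc : a + 1 ∈ I := by
        by_cases hsb : a + 1 = b
        · exact hsb ▸ hb
        · by_contra hns
          exact mix_mem hI ((hmemX _).2 (Or.inl (by omega))) hns hb ha
            (by rw [warc_iff]; omega) (by rw [warc_iff]; omega)
      have hω : (2*n) ∈ I := by
        by_contra hns
        by_cases hpar : a % 2 = 0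
        · exact mix_mem hI ((hmemX _).2 (Or.inr rfl)) hns ha hsucc
            (by rw [warc_iff]; omega) (by rw [warc_iff]; omega)
        · exact mix_mem hI ((hmemX _).2 (Or.inr rfl)) hns hsucc ha
            (by rw [warc_iff]; omega) (by rw [warc_iff]; omega)
      by_cases hpar : a % 2 = 0
      · exact ⟨a, ha, a+1, hsucc, ha2m, by omega, hpar, by omega, hω⟩
      · exact ⟨a+1, hsucc, a, ha, by omega, ha2m, by omega, by omega, hω⟩
    rcases haX with ha2m | haω
    · rcases hbX with hb2m | hbω
      · rcases lt_or_gt_of_ne habne with h | h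
        · exact chain a b ha hb h hb2m
        · exact chain b a hb ha h ha2m
      · obtain ⟨e, he, o, ho, h1, h2, h3, h4⟩ := omegapair a ha ha2m (hbω ▸ hb)
        exact ⟨e, he, o, ho, h1, h2, h3, h4, hbω ▸ hb⟩
    · rcases hbX with hb2m | hbω
      · obtain ⟨e, he, o, ho, h1, h2, h3, h4⟩ := omegapair b hb hb2m (haω ▸ ha)
        exact ⟨e, he, o, ho, h1, h2, h3, h4, haω ▸ ha⟩
      · exact absurd (haω.trans hbω.symm) habne
  obtain ⟨e, he, o, ho, he2m, ho2m, hepar, hopar, hω⟩ := key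
  have h0 : 0 ∈ I := by
    by_contra hns
    exact mix_mem hI ((hmemX _).2 (Or.inl (by omega))) hns ho hω
      (by rw [warc_iff]; omega) (by rw [warc_iff]; omega)
  have hlast : 2*m - 1 ∈ I := by
    by_contra hns
    exact mix_mem hI ((hmemX _).2 (Or.inl (by omega))) hns hω he
      (by rw [warc_iff]; omega) (by rw [warc_iff]; omega)
  have hall : ∀ v, v < 2*m → v ∈ I := by
    intro v hv
    by_contra hns
    have hv0 : v ≠ 0 := fun h => hns (h ▸ h0)
    have hvl : v ≠ 2*m - 1 := fun h => hns (h ▸ hlast)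
    exact mix_mem hI ((hmemX _).2 (Or.inl hv)) hns hlast h0
      (by rw [warc_iff]; omega) (by rw [warc_iff]; omega)
  refine htriv (Or.inr (Or.inr ?_))
  apply Set.Subset.antisymm hI.1
  intro x hx
  rcases (hmemX x).1 hx with h | h
  · exact hall x h
  · exact h ▸ hω
lemma iso_build (n m : ℕ) (c : ℕ → ℕ) (Y : Set ℕ)
    (hmono : ∀ i j, i < 2*m → j < 2*m → i < j → c i < c j)
    (hlt : ∀ i, i < 2*m → c i < 2*n)
    (hpar : ∀ i, i < 2*m → c i % 2 = i % 2)
    (hYω : 2*n ∈ Y)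
    (hYc : ∀ i, i < 2*m → c i ∈ Y)
    (hYsub : ∀ y ∈ Y, y = 2*n ∨ ∃ i, i < 2*m ∧ c i = y) :
    IsoOn (Warc m) (Warc n) (Set.Iic (2*m)) Y := by
  have hmono' : ∀ i j, i < 2*m → j < 2*m → (c i < c j ↔ i < j) := by
    intro i j hi hj
    constructor
    · intro h
      rcases lt_trichotomy i j with h' | h' | h'
      · exact h'
      · subst h'; omega
      · exact absurd (hmono j i hj hi h') (by omega)
    · exact hmono i j hi hj
  have hg : ∀ x : (Set.Iic (2*m) : Set ℕ), (if (x : ℕ) = 2*m then 2*n else c x) ∈ Y := by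
    rintro ⟨x, hx⟩
    simp only [Set.mem_Iic] at hx
    by_cases h : x = 2*m
    · simp only [h, if_pos rfl]; exact hYω
    · simp only [if_neg h]; exact hYc x (by omega)
  refine ⟨fun x => ⟨if (x : ℕ) = 2*m then 2*n else c x, hg x⟩, ⟨?_, ?_⟩, ?_⟩
  · rintro ⟨x, hx⟩ ⟨y, hy⟩ hxy
    simp only [Set.mem_Iic] at hx hy
    simp only [Subtype.mk.injEq] at hxy ⊢
    by_cases h1 : x = 2*m <;> by_cases h2 : y = 2*m
    · omega
    · rw [if_pos h1, if_neg h2] at hxy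
      have := hlt y (by omega); omega
    · rw [if_neg h1, if_pos h2] at hxy
      have := hlt x (by omega); omega
    · rw [if_neg h1, if_neg h2] at hxy
      have := hmono' x y (by omega) (by omega)
      have := hmono' y x (by omega) (by omega)
      omega
  · rintro ⟨y, hy⟩
    rcases hYsub y hy with rfl | ⟨i, hi, rfl⟩
    · exact ⟨⟨2*m, by simp⟩, by simp⟩
    · refine ⟨⟨i, by simp [Set.mem_Iic]; omega⟩, ?_⟩
      simp only [Subtype.mk.injEq]
      rw [if_neg (by omega)]
  · rintro ⟨a, ha⟩ ⟨b, hb⟩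
    simp only [Set.mem_Iic] at ha hb
    show Warc m a b ↔ Warc n (if a = 2*m then 2*n else c a) (if b = 2*m then 2*n else c b)
    by_cases h1 : a = 2*m <;> by_cases h2 : b = 2*m
    · rw [if_pos h1, if_pos h2, warc_iff, warc_iff]; omega
    · rw [if_pos h1, if_neg h2, warc_iff, warc_iff]
      have := hlt b (by omega); have := hpar b (by omega); omega
    · rw [if_neg h1, if_pos h2, warc_iff, warc_iff]
      have := hlt a (by omega); have := hpar a (by omega); omega
    · rw [if_neg h1, if_neg h2, warc_iff, warc_iff]
      have := hlt a (by omega); have := hpar a (by omega)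
      have := hlt b (by omega); have := hpar b (by omega)
      have := hmono' a b (by omega) (by omega)
      omega
lemma parity_alt (n k : ℕ) (Y : Set ℕ) (c : ℕ → ℕ)
    (hωY : 2*n ∈ Y)
    (hind : IndecomposableOn (Warc n) Y)
    (hk4 : 4 ≤ k)
    (hmono : ∀ i j, i < k → j < k → i < j → c i < c j)
    (hmem : ∀ i, i < k → c i ∈ Y ∧ c i < 2*n)
    (hsurj : ∀ y ∈ Y, y ≠ 2*n → ∃ i, i < k ∧ c i = y) :
    (∀ i, i < k → c i % 2 = i % 2) ∧ k % 2 = 0 := by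
  have step : ∀ i, i + 1 < k → c i % 2 ≠ c (i+1) % 2 := by
    intro i hi1 hsame
    have hi : i < k := by omega
    have hbi := (hmem i hi).2
    have hbi1 := (hmem (i+1) hi1).2
    have hlt : c i < c (i+1) := hmono i (i+1) hi hi1 (by omega)
    have hint : IsIntervalOn (Warc n) Y ({c i, c (i+1)} : Set ℕ) := by
      constructor
      · rintro x (rfl | rfl)
        · exact (hmem i hi).1
        · exact (hmem (i+1) hi1).1
      · rintro x ⟨hxY, hxI⟩
        simp only [Set.mem_insert_iff, Set.mem_singleton_iff, not_or] at hxI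
        by_cases hx2n : x = 2*n
        · subst hx2n
          by_cases hp : c i % 2 = 0
          · left
            rintro v (rfl | rfl) <;> (rw [warc_iff]; omega)
          · right
            rintro v (rfl | rfl) <;> (rw [warc_iff]; omega)
        · obtain ⟨j, hj, rfl⟩ := hsurj x hxY hx2n
          have hji : j ≠ i := fun h => hxI.1 (by rw [h])
          have hji1 : j ≠ i + 1 := fun h => hxI.2 (by rw [h])
          rcases lt_or_gt_of_ne hji with h | h
          · left
            have h1 : c j < c i := hmono j i hj hi h
            have h2 : c j < c (i+1) := hmono j (i+1) hj hi1 (by omega)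
            have := (hmem j hj).2
            rintro v (rfl | rfl) <;> (rw [warc_iff]; omega)
          · right
            have h1 : c i < c j := hmono i j hi hj h
            have h2 : c (i+1) < c j := hmono (i+1) j hi1 hj (by omega)
            have := (hmem j hj).2
            rintro v (rfl | rfl) <;> (rw [warc_iff]; omega)
    refine not_trivial (x := c i) (y := c (i+1)) (z := 2*n) (by simp) (by simp)
      (by omega) hωY ?_ (hind _ hint)
    simp only [Set.mem_insert_iff, Set.mem_singleton_iff, not_or]
    omega
  have first : c 0 % 2 = 0 := by
    by_contra h1
    have h0k : 0 < k := by omega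
    have h1k : 1 < k := by omega
    have hb0 := (hmem 0 h0k).2
    have hint : IsIntervalOn (Warc n) Y (Y \ {c 0}) := by
      refine ⟨Set.diff_subset, ?_⟩
      rintro x ⟨hxY, hxI⟩
      have hx : x = c 0 := by
        by_contra h
        exact hxI ⟨hxY, h⟩
      subst hx
      left
      rintro v ⟨hvY, hv0⟩
      simp only [Set.mem_singleton_iff] at hv0
      by_cases hv2n : v = 2*n
      · subst hv2n; rw [warc_iff]; omega
      · obtain ⟨j, hj, rfl⟩ := hsurj v hvY hv2n
        have hj0 : j ≠ 0 := fun h => hv0 (by rw [h])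
        have := hmono 0 j h0k hj (by omega)
        have := (hmem j hj).2
        rw [warc_iff]; omega
    have hc1 := hmem 1 h1k
    have h01 : c 0 < c 1 := hmono 0 1 h0k h1k (by omega)
    refine not_trivial (I := Y \ {c 0}) (x := 2*n) (y := c 1) (z := c 0)
      ⟨hωY, by simp; omega⟩ ⟨hc1.1, by simp; omega⟩ (by omega)
      (hmem 0 h0k).1 (by simp) (hind _ hint)
  have last : c (k-1) % 2 = 1 := by
    by_contra h1
    have hlk : k - 1 < k := by omega
    have h0k : 0 < k := by omega
    have hbl := (hmem (k-1) hlk).2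
    have hint : IsIntervalOn (Warc n) Y (Y \ {c (k-1)}) := by
      refine ⟨Set.diff_subset, ?_⟩
      rintro x ⟨hxY, hxI⟩
      have hx : x = c (k-1) := by
        by_contra h
        exact hxI ⟨hxY, h⟩
      subst hx
      right
      rintro v ⟨hvY, hv0⟩
      simp only [Set.mem_singleton_iff] at hv0
      by_cases hv2n : v = 2*n
      · subst hv2n; rw [warc_iff]; omega
      · obtain ⟨j, hj, rfl⟩ := hsurj v hvY hv2n
        have hjl : j ≠ k - 1 := fun h => hv0 (by rw [h])
        have := hmono j (k-1) hj hlk (by omega)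
        have := (hmem j hj).2
        rw [warc_iff]; omega
    have hc0 := hmem 0 h0k
    have h01 : c 0 < c (k-1) := hmono 0 (k-1) h0k hlk (by omega)
    refine not_trivial (I := Y \ {c (k-1)}) (x := 2*n) (y := c 0) (z := c (k-1))
      ⟨hωY, by simp; omega⟩ ⟨hc0.1, by simp; omega⟩ (by omega)
      (hmem (k-1) hlk).1 (by simp) (hind _ hint)
  have hall : ∀ i, i < k → c i % 2 = i % 2 := by
    intro i
    induction i with
    | zero => intro _; simpa using first
    | succ i ih =>
      intro h
      have h1 := step i h
      have h2 := ih (by omega)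
      omega
  refine ⟨hall, ?_⟩
  have := hall (k-1) (by omega)
  omega

/-- For `n ≥ 2`, the indecomposable subtournaments of `W_{2n+1}` on at least 5 vertices are,
up to isomorphism, exactly the `W_{2m+1}` for `2 ≤ m ≤ n`. -/
theorem W_indecomposable_subtournaments (n : ℕ) (hn : 2 ≤ n) :
    (∀ Y : Set ℕ, Y ⊆ Set.Iic (2*n) → 5 ≤ Y.ncard →
      IndecomposableOn (Warc n) Y →
      ∃ m : ℕ, 2 ≤ m ∧ m ≤ n ∧ IsoOn (Warc m) (Warc n) (Set.Iic (2*m)) Y) ∧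
    (∀ m : ℕ, 2 ≤ m → m ≤ n →
      ∃ Y : Set ℕ, Y ⊆ Set.Iic (2*n) ∧ IndecomposableOn (Warc n) Y ∧
        IsoOn (Warc m) (Warc n) (Set.Iic (2*m)) Y) := by
  constructor
  · intro Y hYsub hY5 hind
    have hfin : Y.Finite := (Set.finite_Iic _).subset hYsub
    have hne : Y.Nonempty := Set.nonempty_of_ncard_ne_zero (by omega)
    have hωY : 2*n ∈ Y := by
      by_contra hω
      obtain ⟨a, haY, hamin⟩ := Set.exists_min_image Y id hfin hne
      have ha2n : a ≠ 2*n := fun h => hω (h ▸ haY)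
      have hint : IsIntervalOn (Warc n) Y (Y \ {a}) := by
        refine ⟨Set.diff_subset, ?_⟩
        rintro x ⟨hxY, hxI⟩
        have hx : x = a := by by_contra h; exact hxI ⟨hxY, h⟩
        subst hx
        left
        rintro v ⟨hvY, hv⟩
        simp only [Set.mem_singleton_iff] at hv
        have h1 : x ≤ 2*n := hYsub hxY
        have h2 : v ≤ 2*n := hYsub hvY
        have h3 : v ≠ 2*n := fun h => hω (h ▸ hvY)
        have h4 : x ≤ v := hamin v hvY
        rw [warc_iff]; omega
      have hd1 : (Y \ {a}).ncard + 1 = Y.ncard := Set.ncard_diff_singleton_add_one haY hfin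
      obtain ⟨x, hx, y, hy, hxy⟩ := (Set.one_lt_ncard (s := Y \ {a}) (hfin.diff)).1 (by omega)
      exact not_trivial hx hy hxy haY (by simp) (hind _ hint)
    have hCfin : (Y \ {2*n}).Finite := hfin.diff
    have hk1 : (Y \ {2*n}).ncard + 1 = Y.ncard := Set.ncard_diff_singleton_add_one hωY hfin
    set k := (Y \ {2*n}).ncard with hk
    have hk4 : 4 ≤ k := by omega
    have hCsub : Y \ {2*n} ⊆ Set.Iio (2*n) := by
      rintro x ⟨hxY, hx⟩
      simp only [Set.mem_singleton_iff] at hx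
      exact Set.mem_Iio.2 (lt_of_le_of_ne (hYsub hxY) hx)
    have hk2n : k ≤ 2*n := by
      have h1 := Set.ncard_le_ncard hCsub (Set.finite_Iio _)
      have h2 : (Set.Iio (2*n)).ncard = 2*n := by
        rw [← Finset.coe_range, Set.ncard_coe_finset, Finset.card_range]
      omega
    have hcard : hCfin.toFinset.card = k := (Set.ncard_eq_toFinset_card _ hCfin).symm
    set e := hCfin.toFinset.orderIsoOfFin hcard with he
    set c : ℕ → ℕ := fun i => if h : i < k then (e ⟨i, h⟩ : ℕ) else 0 with hc
    have hcdef : ∀ i (h : i < k), c i = (e ⟨i, h⟩ : ℕ) := fun i h => dif_pos h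
    have hcmem : ∀ i, i < k → c i ∈ Y \ {2*n} := by
      intro i h; rw [hcdef i h]
      exact hCfin.mem_toFinset.1 (e ⟨i, h⟩).2
    have hmono : ∀ i j, i < k → j < k → i < j → c i < c j := by
      intro i j hi hj hij
      rw [hcdef i hi, hcdef j hj]
      exact Subtype.coe_lt_coe.2 (e.lt_iff_lt.2 hij)
    have hmem : ∀ i, i < k → c i ∈ Y ∧ c i < 2*n := by
      intro i h
      exact ⟨(hcmem i h).1, Set.mem_Iio.1 (hCsub (hcmem i h))⟩
    have hsurj : ∀ y ∈ Y, y ≠ 2*n → ∃ i, i < k ∧ c i = y := by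
      intro y hy hy2
      have hyC : y ∈ hCfin.toFinset := hCfin.mem_toFinset.2 ⟨hy, by simpa using hy2⟩
      obtain ⟨i, hi⟩ := e.surjective ⟨y, hyC⟩
      refine ⟨i.1, i.2, ?_⟩
      rw [hcdef i.1 i.2, Fin.eta, hi]
    obtain ⟨hall, hkeven⟩ := parity_alt n k Y c hωY hind hk4 hmono hmem hsurj
    refine ⟨k / 2, by omega, by omega, ?_⟩
    have hkm : 2 * (k / 2) = k := by omega
    refine iso_build n (k/2) c Y ?_ ?_ ?_ hωY ?_ ?_
    · intro i j hi hj hij; exact hmono i j (by omega) (by omega) hij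
    · intro i hi; exact (hmem i (by omega)).2
    · intro i hi; exact hall i (by omega)
    · intro i hi; exact (hmem i (by omega)).1
    · intro y hy
      by_cases h : y = 2*n
      · exact Or.inl h
      · obtain ⟨i, hi, hci⟩ := hsurj y hy h
        exact Or.inr ⟨i, by omega, hci⟩
  · intro m hm hmn
    refine ⟨Set.Iio (2*m) ∪ {2*n}, ?_, W_indec n m hm hmn, ?_⟩
    · rintro x (hx | hx)
      · simp only [Set.mem_Iio] at hx
        exact Set.mem_Iic.2 (by omega)
      · simp only [Set.mem_singleton_iff] at hx
        exact Set.mem_Iic.2 (by omega)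
    · refine iso_build n m (fun i => i) _ ?_ ?_ ?_ ?_ ?_ ?_
      · intro i j _ _ h; exact h
      · intro i hi; show i < 2*n; omega
      · intro i _; rfl
      · exact Or.inr rfl
      · intro i hi; exact Or.inl (Set.mem_Iio.2 hi)
      · intro y hy
        rcases hy with hy | hy
        · exact Or.inr ⟨y, Set.mem_Iio.1 hy, rfl⟩
        · exact Or.inl hy
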